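/- Let B = (b₁,b₂,b₃) ∈ ℝ³ with b = |B|. Then B̂³ = −b² B̂. Moreover, let φ(ζ) = Σ_{n≥0} cₙ ζⁿ be an entire function with real coefficients cₙ, and write φ(iy) = φ(0) + iy φ₁(y) − y² φ₂(y) with φ₁(y) = Σ_{j≥0} c_{2j+1}(−y²)^j and φ₂(y) = Σ_{j≥0} c_{2j+2}(−y²)^j. Then the matrix function defined by the power series satisfies the Rodriguez-type formula φ(B̂) = φ(0) I + φ₁(b) B̂ + φ₂(b) B̂². -/

import Mathlib

noncomputable section

attribute [local instance] Matrix.normedAddCommGroup Matrix.normedSpace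

/-- The skew-symmetric matrix `B̂` associated with `B ∈ ℝ³`, so that `B̂ v = B × v`. -/
def hat (B : Fin 3 → ℝ) : Matrix (Fin 3) (Fin 3) ℝ :=
  !![0, -B 2, B 1; B 2, 0, -B 0; -B 1, B 0, 0]

/-- The Euclidean norm of a vector in `ℝ³`. -/
def enorm3 (B : Fin 3 → ℝ) : ℝ := Real.sqrt (B 0 ^ 2 + B 1 ^ 2 + B 2 ^ 2)

lemma enorm3_sq (B : Fin 3 → ℝ) : enorm3 B ^ 2 = B 0 ^ 2 + B 1 ^ 2 + B 2 ^ 2 := by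
  unfold enorm3
  rw [Real.sq_sqrt] <;> positivity

lemma hat_cube (B : Fin 3 → ℝ) : hat B ^ 3 = -(enorm3 B ^ 2) • hat B := by
  rw [enorm3_sq]
  show hat B ^ 3 = _
  rw [pow_succ, pow_two]
  ext i j
  fin_cases i <;> fin_cases j <;>
    simp [hat, Matrix.mul_apply, Fin.sum_univ_three] <;> ring

/-- For `B ∈ ℝ³` with `b = |B|`, one has `B̂³ = −b² B̂`; and for an entire
function `φ(ζ) = Σ cₙ ζⁿ` with real coefficients, writing
`φ(iy) = φ(0) + iy φ₁(y) − y² φ₂(y)` with `φ₁(y) = Σ_j c_{2j+1}(−y²)^j` and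
`φ₂(y) = Σ_j c_{2j+2}(−y²)^j`, the matrix function defined by the power series satisfies the
Rodriguez-type formula `φ(B̂) = φ(0) I + φ₁(b) B̂ + φ₂(b) B̂²`. -/
theorem stmt7 (B : Fin 3 → ℝ) (c : ℕ → ℝ)
    (hc : ∀ r : ℝ, 0 ≤ r → Summable fun n => |c n| * r ^ n) :
    hat B ^ 3 = -(enorm3 B ^ 2) • hat B ∧
    (∑' n : ℕ, c n • hat B ^ n) =
      c 0 • (1 : Matrix (Fin 3) (Fin 3) ℝ)
        + (∑' j : ℕ, c (2 * j + 1) * (-(enorm3 B ^ 2)) ^ j) • hat B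
        + (∑' j : ℕ, c (2 * j + 2) * (-(enorm3 B ^ 2)) ^ j) • hat B ^ 2 := by
  set A := hat B with hA
  set b2 : ℝ := enorm3 B ^ 2 with hb2
  have hb2nn : 0 ≤ b2 := by rw [hb2]; positivity
  have h3 : A ^ 3 = -b2 • A := hat_cube B
  refine ⟨h3, ?_⟩
  -- powers
  have hodd : ∀ j : ℕ, A ^ (2 * j + 1) = (-b2) ^ j • A := by
    intro j
    induction j with
    | zero => simp
    | succ j ih =>
      have : 2 * (j + 1) + 1 = (2 * j + 1) + 2 := by ring
      rw [this, pow_add, ih, Matrix.smul_mul, ← pow_succ', h3, smul_smul, pow_succ]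
  have heven : ∀ j : ℕ, A ^ (2 * j + 2) = (-b2) ^ j • A ^ 2 := by
    intro j
    have : 2 * j + 2 = (2 * j + 1) + 1 := by ring
    rw [this, pow_succ, hodd j, Matrix.smul_mul, ← pow_two]
  -- scalar summability
  set r : ℝ := b2 + 1 with hr
  have hr1 : (1:ℝ) ≤ r := by rw [hr]; linarith
  have hrnn : (0:ℝ) ≤ r := by linarith
  have hsum := hc r hrnn
  have key : ∀ m : ℕ, Summable (fun j : ℕ => c (2 * j + m) * (-b2) ^ j) := by
    intro m
    have hinj : Function.Injective (fun j : ℕ => 2 * j + m) := by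
      intro a b h; dsimp only at h; omega
    have hsub : Summable (fun j : ℕ => |c (2 * j + m)| * r ^ (2 * j + m)) :=
      hsum.comp_injective hinj
    refine Summable.of_norm (hsub.of_nonneg_of_le (fun j => by positivity) ?_)
    intro j
    rw [norm_mul, norm_pow]
    have h1 : ‖c (2 * j + m)‖ = |c (2 * j + m)| := rfl
    rw [h1]
    apply mul_le_mul_of_nonneg_left _ (abs_nonneg _)
    calc ‖-b2‖ ^ j = b2 ^ j := by rw [norm_neg, Real.norm_of_nonneg hb2nn]
      _ ≤ r ^ j := by gcongr; linarith
      _ ≤ r ^ (2 * j + m) := pow_le_pow_right₀ hr1 (by omega)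
  have hs1 := key 1
  have hs2 := key 2
  -- matrix summability
  have hso : Summable (fun j : ℕ => c (2 * j + 1) • A ^ (2 * j + 1)) := by
    simpa [hodd, smul_smul] using hs1.smul_const A
  have hse : Summable (fun j : ℕ => c (2 * j + 2) • A ^ (2 * j + 2)) := by
    simpa [heven, smul_smul] using hs2.smul_const (A ^ 2)
  set f : ℕ → Matrix (Fin 3) (Fin 3) ℝ := fun n => c n • A ^ n with hf
  have hg : Summable (fun n : ℕ => f (n + 1)) := by
    apply Summable.even_add_odd
    · simpa [hf, show ∀ k, 2 * k + 1 = 2 * k + 1 from fun _ => rfl] using hso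
    · simpa [hf, show ∀ k : ℕ, 2 * k + 1 + 1 = 2 * k + 2 from fun _ => by omega] using hse
  have hF : Summable f := (summable_nat_add_iff 1).mp hg
  have step1 : (∑' n, f n) = f 0 + ∑' n, f (n + 1) := Summable.tsum_eq_zero_add hF
  have step2 : (∑' n, f (n + 1)) =
      (∑' k, f (2 * k + 1)) + (∑' k, f (2 * k + 2)) := by
    have h := tsum_even_add_odd (f := fun n => f (n + 1))
      (by simpa [hf] using hso)
      (by simpa [hf, show ∀ k : ℕ, 2 * k + 1 + 1 = 2 * k + 2 from fun _ => by omega] using hse)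
    simp only [show ∀ k : ℕ, 2 * k + 1 + 1 = 2 * k + 2 from fun _ => by omega] at h
    exact h.symm
  have hodd' : (∑' k, f (2 * k + 1)) = (∑' j : ℕ, c (2 * j + 1) * (-b2) ^ j) • A := by
    rw [← Summable.tsum_smul_const hs1 A]
    congr 1
    funext k
    rw [hf]
    simp only [hodd, smul_smul]
  have heven' : (∑' k, f (2 * k + 2)) = (∑' j : ℕ, c (2 * j + 2) * (-b2) ^ j) • A ^ 2 := by
    rw [← Summable.tsum_smul_const hs2 (A ^ 2)]
    congr 1
    funext k
    rw [hf]
    simp only [heven, smul_smul]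
  calc (∑' n, f n) = f 0 + ((∑' k, f (2 * k + 1)) + (∑' k, f (2 * k + 2))) := by
        rw [step1, step2]
    _ = c 0 • 1 + (∑' j : ℕ, c (2 * j + 1) * (-b2) ^ j) • A
          + (∑' j : ℕ, c (2 * j + 2) * (-b2) ^ j) • A ^ 2 := by
        rw [hodd', heven', hf]; simp [add_assoc]
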